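/- For every α ≥ 2, the integral over ℝ² of 2α²(|y|^{α−2}/(1 + |y|^α)²)·((1 − |y|^α)/(1 + |y|^α))·log|y| equals −4π. -/

import Mathlib

open MeasureTheory Real Finset

noncomputable def laplacian (f : EuclideanSpace ℝ (Fin 2) → ℝ) (x : EuclideanSpace ℝ (Fin 2)) : ℝ :=
  ∑ i : Fin 2, fderiv ℝ (fun y => fderiv ℝ f y (EuclideanSpace.single i 1)) x (EuclideanSpace.single i 1)

open Set Filter


noncomputable def Gfun (α : ℝ) (r : ℝ) : ℝ :=
  2 * α * (r ^ α * Real.log r) / (1 + r ^ α) ^ 2 + 2 / (1 + r ^ α)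

noncomputable def gder (α : ℝ) (r : ℝ) : ℝ :=
  2 * α ^ 2 * r ^ (α - 1) * ((1 - r ^ α) / (1 + r ^ α) ^ 3) * Real.log r

lemma gder_hasDeriv {α : ℝ} (hα : 0 < α) {r : ℝ} (hr : 0 < r) :
    HasDerivAt (Gfun α) (gder α r) r := by
  have hu : (0:ℝ) < 1 + r ^ α := by positivity
  have hrpow : HasDerivAt (fun x : ℝ => x ^ α) (α * r ^ (α - 1)) r :=
    Real.hasDerivAt_rpow_const (Or.inl hr.ne')
  have hnum : HasDerivAt (fun x : ℝ => x ^ α * Real.log x)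
      (α * r ^ (α - 1) * Real.log r + r ^ (α - 1)) r := by
    have h := hrpow.mul (Real.hasDerivAt_log hr.ne')
    refine h.congr_deriv ?_
    have e : r ^ (α - 1) = r ^ α * r⁻¹ := by
      rw [Real.rpow_sub hr, Real.rpow_one, div_eq_mul_inv]
    rw [e]
  have hden : HasDerivAt (fun x : ℝ => (1 + x ^ α) ^ 2)
      (2 * (1 + r ^ α) ^ 1 * (α * r ^ (α - 1))) r := by
    have := ((hasDerivAt_const r (1:ℝ)).add hrpow).pow 2
    exact this.congr_deriv (by norm_num)
  have h1 : HasDerivAt (fun x : ℝ => 2 * α * (x ^ α * Real.log x) / (1 + x ^ α) ^ 2)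
      (((2 * α) * (α * r ^ (α - 1) * Real.log r + r ^ (α - 1)) * (1 + r ^ α) ^ 2 -
        (2 * α) * (r ^ α * Real.log r) * (2 * (1 + r ^ α) ^ 1 * (α * r ^ (α - 1)))) /
        ((1 + r ^ α) ^ 2) ^ 2) r := by
    have := (hnum.const_mul (2 * α)).div hden (by positivity)
    exact this.congr_deriv (by ring)
  have h2 : HasDerivAt (fun x : ℝ => 2 / (1 + x ^ α))
      ((0 * (1 + r ^ α) - 2 * (0 + α * r ^ (α - 1))) / (1 + r ^ α) ^ 2) r :=
    (hasDerivAt_const r (2:ℝ)).div ((hasDerivAt_const r (1:ℝ)).add hrpow) hu.ne'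
  have h := h1.add h2
  refine h.congr_deriv ?_
  unfold gder
  set u := r ^ α
  set v := r ^ (α - 1)
  set L := Real.log r
  field_simp
  ring



lemma gder_meas (α : ℝ) : AEStronglyMeasurable (gder α) (volume : Measure ℝ) := by
  unfold gder
  apply Measurable.aestronglyMeasurable
  measurability

lemma gder_integrable {α : ℝ} (hα : 2 ≤ α) : IntegrableOn (gder α) (Ioi 0) := by
  have hα0 : (0:ℝ) < α := by linarith
  rw [← Ioc_union_Ioi_eq_Ioi (zero_le_one)]
  apply IntegrableOn.union
  · -- bounded on (0,1]
    apply Measure.integrableOn_of_bounded (M := 2 * α ^ 2)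
      (by simp [measure_Ioc_lt_top.ne]) (gder_meas α)
    rw [ae_restrict_iff' measurableSet_Ioc]
    filter_upwards with r hr
    obtain ⟨h0, h1⟩ := hr
    have hu0 : (0:ℝ) ≤ r ^ α := rpow_nonneg h0.le _
    have hu : (0:ℝ) < 1 + r ^ α := by positivity
    have hA : r ^ (α - 1) ≤ r := by
      nth_rewrite 2 [← Real.rpow_one r]
      exact Real.rpow_le_rpow_of_exponent_ge h0 h1 (by linarith)
    have hBn : (0:ℝ) ≤ |1 - r ^ α| / (1 + r ^ α) ^ 3 := by positivity
    have hB : |1 - r ^ α| / (1 + r ^ α) ^ 3 ≤ 1 := by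
      rw [div_le_one (by positivity), abs_le]
      have hcube : 1 + r ^ α ≤ (1 + r ^ α) ^ 3 := by
        nlinarith [sq_nonneg (r ^ α), mul_nonneg (mul_nonneg hu0 hu0) hu0]
      constructor <;> nlinarith
    have hC : r * |Real.log r| ≤ 1 := by
      rw [abs_of_nonpos (Real.log_nonpos h0.le h1)]
      have h2 := Real.log_le_sub_one_of_pos (inv_pos.mpr h0)
      rw [Real.log_inv] at h2
      have h3 : r * -Real.log r ≤ r * (r⁻¹ - 1) :=
        mul_le_mul_of_nonneg_left (by linarith) h0.le
      have h4 : r * r⁻¹ = 1 := mul_inv_cancel₀ h0.ne'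
      nlinarith
    have hvL : r ^ (α - 1) * |Real.log r| ≤ 1 :=
      le_trans (mul_le_mul_of_nonneg_right hA (abs_nonneg _)) hC
    have hv0 : (0:ℝ) ≤ r ^ (α - 1) := rpow_nonneg h0.le _
    calc ‖gder α r‖ = 2 * α ^ 2 * ((r ^ (α - 1) * |Real.log r|) *
          (|1 - r ^ α| / (1 + r ^ α) ^ 3)) := by
          unfold gder
          rw [norm_eq_abs, abs_mul, abs_mul, abs_mul, abs_div, abs_of_nonneg (by positivity : (0:ℝ) ≤ 2 * α ^ 2),
            abs_of_nonneg hv0, abs_of_nonneg (by positivity : (0:ℝ) ≤ (1 + r ^ α) ^ 3)]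
          ring
      _ ≤ 2 * α ^ 2 * (1 * 1) := by
          apply mul_le_mul_of_nonneg_left _ (by positivity)
          exact mul_le_mul hvL hB hBn (by nlinarith [mul_nonneg hv0 (abs_nonneg (Real.log r))] )
      _ = 2 * α ^ 2 := by ring
  · -- dominated by 2α² r^(-2) on (1,∞)
    have hg : IntegrableOn (fun r : ℝ => 2 * α ^ 2 * r ^ (-2 : ℝ)) (Ioi 1) :=
      (integrableOn_Ioi_rpow_of_lt (by norm_num) one_pos).const_mul _
    apply Integrable.mono hg ((gder_meas α).restrict) ?_
    rw [ae_restrict_iff' measurableSet_Ioi]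
    filter_upwards with r hr
    have hr1 : (1:ℝ) ≤ r := le_of_lt hr
    have hr0 : (0:ℝ) < r := lt_of_lt_of_le one_pos hr1
    have hu1 : (1:ℝ) ≤ r ^ α := Real.one_le_rpow hr1 hα0.le
    have hu : (0:ℝ) < 1 + r ^ α := by positivity
    have hL0 : (0:ℝ) ≤ Real.log r := Real.log_nonneg hr1
    have hLr : Real.log r ≤ r := by
      have := Real.log_le_sub_one_of_pos hr0; linarith
    have hv0 : (0:ℝ) ≤ r ^ (α - 1) := rpow_nonneg hr0.le _
    have hB : |1 - r ^ α| / (1 + r ^ α) ^ 3 ≤ 1 / (r ^ α) ^ 2 := by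
      rw [div_le_div_iff₀ (by positivity) (by positivity),
        abs_of_nonpos (by linarith : 1 - r ^ α ≤ 0)]
      nlinarith
    have key : r ^ (α - 1) * (1 / (r ^ α) ^ 2) * r = r ^ (-α) := by
      rw [one_div, ← Real.rpow_natCast (r ^ α) 2, ← Real.rpow_mul hr0.le,
        ← Real.rpow_neg hr0.le]
      rw [← Real.rpow_add hr0, ← Real.rpow_add_one hr0.ne']
      norm_num
      ring_nf
    have hfin : r ^ (-α) ≤ r ^ (-2 : ℝ) :=
      Real.rpow_le_rpow_of_exponent_le hr1 (by linarith)
    calc ‖gder α r‖ = 2 * α ^ 2 * (r ^ (α - 1) * (|1 - r ^ α| / (1 + r ^ α) ^ 3) * Real.log r) := by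
          unfold gder
          rw [norm_eq_abs, abs_mul, abs_mul, abs_mul, abs_div,
            abs_of_nonneg (by positivity : (0:ℝ) ≤ 2 * α ^ 2), abs_of_nonneg hv0,
            abs_of_nonneg (by positivity : (0:ℝ) ≤ (1 + r ^ α) ^ 3), abs_of_nonneg hL0]
          ring
      _ ≤ 2 * α ^ 2 * (r ^ (α - 1) * (1 / (r ^ α) ^ 2) * r) := by
          apply mul_le_mul_of_nonneg_left _ (by positivity)
          apply mul_le_mul (mul_le_mul_of_nonneg_left hB hv0) hLr hL0 (by positivity)
      _ = 2 * α ^ 2 * r ^ (-α) := by rw [key]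
      _ ≤ 2 * α ^ 2 * r ^ (-2:ℝ) := mul_le_mul_of_nonneg_left hfin (by positivity)
      _ ≤ ‖2 * α ^ 2 * r ^ (-2:ℝ)‖ := le_abs_self _



lemma Gfun_zero {α : ℝ} (hα : 0 < α) : Gfun α 0 = 2 := by
  simp [Gfun, Real.zero_rpow hα.ne']

lemma Gfun_cont {α : ℝ} (hα : 0 < α) : ContinuousWithinAt (Gfun α) (Ici 0) 0 := by
  have h1 : Tendsto (fun r : ℝ => r ^ α) (nhdsWithin 0 (Ioi 0)) (nhds 0) := by
    have hc : ContinuousAt (fun x : ℝ => x ^ α) 0 :=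
      Real.continuousAt_rpow_const 0 α (Or.inr hα.le)
    have := hc.tendsto
    rw [Real.zero_rpow hα.ne'] at this
    exact this.mono_left nhdsWithin_le_nhds
  have h2 : Tendsto (fun r : ℝ => r ^ α * Real.log r) (nhdsWithin 0 (Ioi 0)) (nhds 0) :=
    (tendsto_log_mul_rpow_nhdsGT_zero hα).congr (fun x => mul_comm _ _)
  have h3 : Tendsto (Gfun α) (nhdsWithin 0 (Ioi 0))
      (nhds (2 * α * 0 / (1 + 0) ^ 2 + 2 / (1 + 0))) := by
    unfold Gfun
    exact ((tendsto_const_nhds.mul h2).div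
      (((tendsto_const_nhds.add h1)).pow 2) (by norm_num)).add
      (tendsto_const_nhds.div (tendsto_const_nhds.add h1) (by norm_num))
  norm_num at h3
  have : ContinuousWithinAt (Gfun α) (Ioi 0) 0 := by
    unfold ContinuousWithinAt
    rw [Gfun_zero hα]
    exact h3
  rw [← Set.Ioi_insert]
  exact this.insert
  -- or continuousWithinAt_insert_self

lemma Gfun_top {α : ℝ} (hα : 0 < α) : Tendsto (Gfun α) atTop (nhds 0) := by
  have l1 : Tendsto (fun r : ℝ => Real.log r / r ^ α) atTop (nhds 0) :=
    (isLittleO_log_rpow_atTop hα).tendsto_div_nhds_zero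
  have l2 : Tendsto (fun r : ℝ => r ^ α) atTop atTop := tendsto_rpow_atTop hα
  have l3 : Tendsto (fun t : ℝ => t / (1 + t)) atTop (nhds 1) := by
    have h : Tendsto (fun t : ℝ => 1 - 1 / (1 + t)) atTop (nhds (1 - 0)) :=
      tendsto_const_nhds.sub (tendsto_const_nhds.div_atTop
        (tendsto_atTop_add_const_left _ 1 tendsto_id))
    rw [sub_zero] at h
    apply h.congr'
    filter_upwards [eventually_gt_atTop (0:ℝ)] with t ht
    field_simp
    ring
  have l4 : Tendsto (fun r : ℝ => r ^ α / (1 + r ^ α)) atTop (nhds 1) := l3.comp l2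
  have l5 : Tendsto (fun r : ℝ => 2 / (1 + r ^ α)) atTop (nhds 0) :=
    tendsto_const_nhds.div_atTop (tendsto_atTop_add_const_left _ 1 l2)
  have l6 : Tendsto (fun r : ℝ => 2 * α * ((Real.log r / r ^ α) *
      ((r ^ α / (1 + r ^ α)) * (r ^ α / (1 + r ^ α)))) + 2 / (1 + r ^ α)) atTop
      (nhds (2 * α * (0 * (1 * 1)) + 0)) :=
    (tendsto_const_nhds.mul (l1.mul (l4.mul l4))).add l5
  norm_num at l6
  apply l6.congr'
  filter_upwards [eventually_gt_atTop (0:ℝ)] with r hr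
  have hu : (0:ℝ) < r ^ α := Real.rpow_pos_of_pos hr _
  unfold Gfun
  field_simp

lemma integral_gder {α : ℝ} (hα : 2 ≤ α) : ∫ r in Ioi (0:ℝ), gder α r = -2 := by
  have hα0 : (0:ℝ) < α := by linarith
  rw [integral_Ioi_of_hasDerivAt_of_tendsto (Gfun_cont hα0)
    (fun x hx => gder_hasDeriv hα0 hx) (gder_integrable hα) (Gfun_top hα0)]
  rw [Gfun_zero hα0]
  norm_num

lemma ball_vol : (volume (Metric.ball (0 : EuclideanSpace ℝ (Fin 2)) 1)).toReal = π := by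
  rw [EuclideanSpace.volume_ball]
  simp only [Fintype.card_fin]
  norm_num [Real.sq_sqrt Real.pi_nonneg, Real.Gamma_two, ENNReal.toReal_ofReal Real.pi_nonneg]

theorem singular_kernel_lognorm_integral (α : ℝ) (hα : 2 ≤ α) :
    ∫ y : EuclideanSpace ℝ (Fin 2),
      2 * α ^ 2 * (‖y‖ ^ (α - 2) / (1 + ‖y‖ ^ α) ^ 2) * ((1 - ‖y‖ ^ α) / (1 + ‖y‖ ^ α)) *
        Real.log ‖y‖ = -(4 * Real.pi) := by
  have key := integral_fun_norm_addHaar (volume : Measure (EuclideanSpace ℝ (Fin 2)))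
    (fun r : ℝ => 2 * α ^ 2 * (r ^ (α - 2) / (1 + r ^ α) ^ 2) * ((1 - r ^ α) / (1 + r ^ α)) *
      Real.log r)
  rw [finrank_euclideanSpace_fin, measureReal_def, ball_vol] at key
  rw [key]
  have inner : ∫ y in Ioi (0:ℝ), y ^ (2 - 1) •
      (2 * α ^ 2 * (y ^ (α - 2) / (1 + y ^ α) ^ 2) * ((1 - y ^ α) / (1 + y ^ α)) * Real.log y)
      = ∫ r in Ioi (0:ℝ), gder α r := by
    apply setIntegral_congr_fun measurableSet_Ioi
    intro y hy
    have hy0 : (0:ℝ) < y := hy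
    have hu : (0:ℝ) < 1 + y ^ α := by positivity
    have e : y ^ (α - 1) = y ^ (α - 2) * y := by
      rw [show α - 1 = (α - 2) + 1 by ring, Real.rpow_add_one hy0.ne']
    simp only [pow_one, smul_eq_mul, gder, e]
    field_simp
    ring
  rw [inner, integral_gder hα]
  simp only [smul_eq_mul]
  ring
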